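/- Let ν, ν_Γ be unit vectors in ℝ^{n+1} and set A_γ = I - ν⊗ν, A_Γ = I - ν_Γ⊗ν_Γ. Then A_γ - A_γ A_Γ A_γ = w ⊗ w where w = ν_Γ - (ν_Γ·ν)ν, and consequently ‖A_γ - A_γ A_Γ A_γ‖_{ℓ₂→ℓ₂} ≤ |ν - ν_Γ|². -/
import Mathlib


open scoped RealInnerProductSpace

/-- For unit vectors `ν, νΓ`, with `Aγ = I - ν⊗ν` and `AΓ = I - νΓ⊗νΓ`:
`Aγ - Aγ AΓ Aγ = w ⊗ w` with `w = νΓ - (νΓ·ν)ν`, and consequently the operator norm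
of `Aγ - Aγ AΓ Aγ` is at most `‖ν - νΓ‖²`. -/
theorem stmt_6 (n : ℕ) (ν νΓ : EuclideanSpace ℝ (Fin (n + 1)))
    (hν : ‖ν‖ = 1) (hνΓ : ‖νΓ‖ = 1)
    (Aγ AΓ : EuclideanSpace ℝ (Fin (n + 1)) → EuclideanSpace ℝ (Fin (n + 1)))
    (hAγ : ∀ x, Aγ x = x - ⟪ν, x⟫ • ν)
    (hAΓ : ∀ x, AΓ x = x - ⟪νΓ, x⟫ • νΓ)
    (w : EuclideanSpace ℝ (Fin (n + 1))) (hw : w = νΓ - ⟪νΓ, ν⟫ • ν) :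
    (∀ x, Aγ x - Aγ (AΓ (Aγ x)) = ⟪w, x⟫ • w) ∧
      (∀ x, ‖Aγ x - Aγ (AΓ (Aγ x))‖ ≤ ‖ν - νΓ‖ ^ 2 * ‖x‖) := by
  have hνν : ⟪ν, ν⟫ = 1 := by
    rw [real_inner_self_eq_norm_sq, hν]; norm_num
  have hΓΓ : ⟪νΓ, νΓ⟫ = 1 := by
    rw [real_inner_self_eq_norm_sq, hνΓ]; norm_num
  have key : ∀ x, Aγ x - Aγ (AΓ (Aγ x)) = ⟪w, x⟫ • w := by
    intro x
    simp only [hAγ, hAΓ, hw, inner_sub_left, inner_sub_right, inner_smul_left,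
      inner_smul_right, hνν, hΓΓ, real_inner_comm νΓ ν, RCLike.star_def, starRingEnd_apply,
      star_trivial]
    module
  refine ⟨key, fun x => ?_⟩
  rw [key x]
  have hw2 : ‖w‖ ^ 2 ≤ ‖ν - νΓ‖ ^ 2 := by
    have h1 : ‖w‖ ^ 2 = 1 - ⟪νΓ, ν⟫ ^ 2 := by
      rw [← real_inner_self_eq_norm_sq, hw]
      simp only [inner_sub_left, inner_sub_right, inner_smul_left, inner_smul_right,
        hνν, hΓΓ, real_inner_comm νΓ ν, RCLike.star_def, starRingEnd_apply, star_trivial]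
      ring
    have h2 : ‖ν - νΓ‖ ^ 2 = 2 - 2 * ⟪νΓ, ν⟫ := by
      rw [← real_inner_self_eq_norm_sq]
      simp only [inner_sub_left, inner_sub_right, hνν, hΓΓ, real_inner_comm νΓ ν]
      ring
    rw [h1, h2]
    nlinarith [sq_nonneg (⟪νΓ, ν⟫ - 1)]
  calc ‖⟪w, x⟫ • w‖ = |⟪w, x⟫| * ‖w‖ := by rw [norm_smul, Real.norm_eq_abs]
    _ ≤ (‖w‖ * ‖x‖) * ‖w‖ := by
        gcongr; exact abs_real_inner_le_norm w x
    _ = ‖w‖ ^ 2 * ‖x‖ := by ring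
    _ ≤ ‖ν - νΓ‖ ^ 2 * ‖x‖ := by gcongr
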